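/- Let A be a skew brace and z ∈ Z_R(A). Then [z+a, b, c] = [a, z+b, c] = [a, b, z+c] = [a,b,c] for all a, b, c ∈ A. -/
import Mathlib


/-- A skew brace: a type with an additive group structure and a second group
operation `circ` (with inverse `cinv` and the same identity `0`) satisfying the
skew brace compatibility law `a ∘ (b + c) = a ∘ b - a + a ∘ c`. -/
class SkewBrace (A : Type*) extends AddGroup A where
  circ : A → A → A
  cinv : A → A
  circ_assoc : ∀ a b c : A, circ (circ a b) c = circ a (circ b c)
  zero_circ : ∀ a : A, circ 0 a = a
  circ_zero : ∀ a : A, circ a 0 = a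
  cinv_circ : ∀ a : A, circ (cinv a) a = 0
  circ_cinv : ∀ a : A, circ a (cinv a) = 0
  compat : ∀ a b c : A, circ a (b + c) = circ a b - a + circ a c

namespace SkewBrace

variable {A : Type*} [SkewBrace A]

/-- The star operation `a * b = -a + a ∘ b - b`. -/
def star (a b : A) : A := -a + circ a b - b

/-- The right distributor `[a,b,c] = (a+b)∘c - b∘c + c - a∘c`. -/
def rd (a b c : A) : A := circ (a + b) c - circ b c + c - circ a c

/-- An ideal of a skew brace: a normal additive subgroup closed under the
star operation on both sides. -/
def IsIdeal (I : AddSubgroup A) : Prop :=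
  (∀ a : A, ∀ x ∈ I, a + x - a ∈ I) ∧
  (∀ a : A, ∀ x ∈ I, star a x ∈ I) ∧
  (∀ a : A, ∀ x ∈ I, star x a ∈ I)

/-- `Z_R(A)`: additively central elements annihilating all right distributors. -/
def ZR (A : Type*) [SkewBrace A] : Set A :=
  {z | (∀ a : A, z + a = a + z) ∧ ∀ b c : A, rd z b c = 0 ∧ rd b z c = 0 ∧ rd b c z = 0}

end SkewBrace

open SkewBrace

/-- Commutation passes to negatives. -/
lemma neg_comm_of_comm {G : Type*} [AddGroup G] (v : G)
    (hv : ∀ x : G, v + x = x + v) : ∀ x : G, -v + x = x + -v := by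
  intro x
  conv_lhs => rw [← neg_neg x]
  rw [← neg_add_rev, ← hv, neg_add_rev, neg_neg]

lemma cent_conj {G : Type*} [AddGroup G] (u : G) (hu : ∀ x : G, u + x = x + u)
    (t : G) : u + t - u = t := by rw [hu t, add_sub_cancel_right]

lemma shape1 {G : Type*} [AddGroup G] (w : G) (hw : ∀ x : G, w + x = x + w)
    (p q r s : G) : (w + p) - q + r - (w + s) = p - q + r - s := by
  calc (w + p) - q + r - (w + s) = w + (p - q + r - s) - w := by
        simp [sub_eq_add_neg, neg_add, add_assoc]
    _ = p - q + r - s := cent_conj w hw _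

lemma shape2 {G : Type*} [AddGroup G] (w : G) (hw : ∀ x : G, w + x = x + w)
    (p q r s : G) : (w + p) - (w + q) + r - s = p - q + r - s := by
  have : (w + p) - (w + q) = w + (p - q) - w := by
    simp [sub_eq_add_neg, neg_add, add_assoc]
  rw [this, cent_conj w hw]

lemma shape3 {G : Type*} [AddGroup G] (a b z u v X Y Zc c : G)
    (hz : ∀ x : G, z + x = x + z) (hu : ∀ x : G, u + x = x + u)
    (hv : ∀ x : G, v + x = x + v) :
    (((a + u) - z + (b + v)) - (a + b) + X) - ((b + v) - b + Y) + (z + c)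
      - ((a + u) - a + Zc) = X - Y + c - Zc := by
  have swap_v : ∀ x y : G, x + (-v + y) = -v + (x + y) := fun x y => by
    rw [← add_assoc, ← neg_comm_of_comm v hv, add_assoc]
  have swap_u : ∀ x y : G, u + (x + y) = x + (u + y) := fun x y => by
    rw [← add_assoc, hu, add_assoc]
  have swap_z : ∀ x y : G, x + (z + y) = z + (x + y) := fun x y => by
    rw [← add_assoc, ← hz, add_assoc]
  simp only [sub_eq_add_neg, neg_add_rev, neg_neg, add_assoc]
  simp only [swap_v, add_neg_cancel_left, neg_add_cancel_left, add_neg_cancel,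
    neg_add_cancel, add_zero, zero_add]
  simp only [swap_u, add_neg_cancel_left, neg_add_cancel_left, add_neg_cancel,
    neg_add_cancel, add_zero, zero_add]
  simp only [swap_z, add_neg_cancel_left, neg_add_cancel_left, add_neg_cancel,
    neg_add_cancel, add_zero, zero_add]

theorem stmt6 {A : Type*} [SkewBrace A] (z : A) (hz : z ∈ ZR A) (a b c : A) :
    rd (z + a) b c = rd a b c ∧ rd a (z + b) c = rd a b c ∧ rd a b (z + c) = rd a b c := by
  obtain ⟨hzc, hrd⟩ := hz
  -- solve `rd x y w = 0` for the first circ term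
  have solve : ∀ x y w : A, rd x y w = 0 →
      circ (x + y) w = circ x w - w + circ y w := by
    intro x y w h
    simp only [rd] at h
    exact eq_add_of_sub_eq (eq_sub_of_add_eq (sub_eq_zero.mp h))
  have hL1 : ∀ p q : A, circ (z + p) q = circ z q - q + circ p q :=
    fun p q => solve z p q (hrd p q).1
  have hL2 : ∀ p q : A, circ (p + z) q = circ p q - q + circ z q :=
    fun p q => solve p z q (hrd p q).2.1
  have hL3 : ∀ p q : A, circ (p + q) z = circ p z - z + circ q z :=
    fun p q => solve p q z (hrd p q).2.2
  have hsurjR : ∀ q x : A, circ (circ x (cinv q)) q = x := by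
    intro q x; rw [circ_assoc, cinv_circ, circ_zero]
  have hsurjL : ∀ p x : A, circ p (circ (cinv p) x) = x := by
    intro p x; rw [← circ_assoc, circ_cinv, zero_circ]
  -- z ∘ c - c is additively central
  have hw0 : ∀ q : A, circ z q - q = -q + circ z q := by
    intro q
    have h1 := hL1 (cinv q) q
    rw [cinv_circ, add_zero] at h1
    have h2 := hL2 (cinv q) q
    rw [cinv_circ, zero_sub] at h2
    rw [← h1, hzc (cinv q), h2]
  have hw : ∀ q x : A, (circ z q - q) + x = x + (circ z q - q) := by
    intro q x
    have hb : circ (circ x (cinv q)) q = x := hsurjR q x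
    calc circ z q - q + x = circ z q - q + circ (circ x (cinv q)) q := by rw [hb]
      _ = circ (z + circ x (cinv q)) q := (hL1 _ q).symm
      _ = circ (circ x (cinv q) + z) q := by rw [hzc]
      _ = circ (circ x (cinv q)) q - q + circ z q := hL2 _ q
      _ = x + (-q + circ z q) := by rw [hb, sub_eq_add_neg, add_assoc]
      _ = x + (circ z q - q) := by rw [hw0 q]
  -- b ∘ z - b is additively central
  have hu0 : ∀ p : A, circ p z - p = -p + circ p z := by
    intro p
    have h1 := compat p z (cinv p)
    rw [circ_cinv, add_zero] at h1
    have h2 := compat p (cinv p) z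
    rw [circ_cinv, zero_sub] at h2
    rw [← h1, hzc (cinv p), h2]
  have hu : ∀ p x : A, (circ p z - p) + x = x + (circ p z - p) := by
    intro p x
    have hb : circ p (circ (cinv p) x) = x := hsurjL p x
    calc circ p z - p + x = circ p z - p + circ p (circ (cinv p) x) := by rw [hb]
      _ = circ p (z + circ (cinv p) x) := (compat p z _).symm
      _ = circ p (circ (cinv p) x + z) := by rw [hzc]
      _ = circ p (circ (cinv p) x) - p + circ p z := compat p _ z
      _ = x + (-p + circ p z) := by rw [hb, sub_eq_add_neg, add_assoc]
      _ = x + (circ p z - p) := by rw [hu0 p]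
  refine ⟨?_, ?_, ?_⟩
  · -- rd (z + a) b c = rd a b c
    simp only [rd]
    rw [add_assoc z a b, hL1 (a + b) c, hL1 a c]
    exact shape1 (circ z c - c) (hw c) _ _ _ _
  · -- rd a (z + b) c = rd a b c
    simp only [rd]
    have h : a + (z + b) = z + (a + b) := by rw [← add_assoc, ← hzc a, add_assoc]
    rw [h, hL1 (a + b) c, hL1 b c]
    exact shape2 (circ z c - c) (hw c) _ _ _ _
  · -- rd a b (z + c) = rd a b c
    simp only [rd]
    rw [compat (a + b) z c, compat b z c, compat a z c, hL3 a b]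
    have ea : circ a z = a + (circ a z - a) := by rw [hu0 a, add_neg_cancel_left]
    have eb : circ b z = b + (circ b z - b) := by rw [hu0 b, add_neg_cancel_left]
    rw [ea, eb]
    exact shape3 a b z (circ a z - a) (circ b z - b) _ _ _ c hzc (hu a) (hu b)
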